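/- arXiv:1904.04791 — 2 statements merged into one kernel-verified Lean document; each statement's English description precedes it below -/
import Mathlib

section
/- If a graph G has an H-partition with layered width at most ℓ such that H has treewidth at most k, then G has layered treewidth at most (k+1)ℓ. -/
/-!
Common definitions for formalizing "Planar Graphs have Bounded Queue-Number"
(Dujmović, Joret, Micek, Morin, Ueckerdt, Wood).

All graphs are finite simple graphs (`SimpleGraph V` with `[Fintype V]`).
-/

open Function

namespace QueuePaper

/-! ### Queue layouts -/

/-- Given a vertex ordering of `G` (an injection `f : V → ℕ`), this says the edges of `G`
can be partitioned into `k` queues with respect to this ordering, i.e. there is an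
assignment `q` of edges to `{0, …, k-1}` such that no two edges in the same class are
nested. (Edges `vw` and `xy` are nested when `f v < f x < f y < f w`.) -/
def OrderingHasQueues {V : Type*} (G : SimpleGraph V) (f : V → ℕ) (k : ℕ) : Prop :=
  ∃ q : Sym2 V → ℕ,
    (∀ ⦃v w : V⦄, G.Adj v w → q s(v, w) < k) ∧
    ∀ ⦃v w x y : V⦄, G.Adj v w → G.Adj x y → q s(v, w) = q s(x, y) →
      ¬(f v < f x ∧ f x < f y ∧ f y < f w)

/-- `G` has a `k`-queue layout: a linear ordering of the vertices together with a
partition of the edges into `k` queues. Equivalently, the queue-number of `G` is at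
most `k`. -/
def HasQueueLayout {V : Type*} (G : SimpleGraph V) (k : ℕ) : Prop :=
  ∃ f : V → ℕ, Function.Injective f ∧ OrderingHasQueues G f k

/-! ### Layerings and partitions -/

/-- A layering of `G`, presented as the function sending each vertex to the index of its
layer: the endpoints of every edge lie in the same or in consecutive layers. -/
def IsLayering {V : Type*} (G : SimpleGraph V) (L : V → ℕ) : Prop :=
  ∀ ⦃v w : V⦄, G.Adj v w → L v ≤ L w + 1 ∧ L w ≤ L v + 1

/-- A BFS layering of `G`: a root is chosen in each connected component and each vertex is
assigned the distance to the root of its component. -/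
def IsBFSLayering {V : Type*} (G : SimpleGraph V) (L : V → ℕ) : Prop :=
  ∃ root : V → V,
    (∀ v, G.Reachable v (root v)) ∧
    (∀ ⦃v w : V⦄, G.Reachable v w → root v = root w) ∧
    ∀ v, L v = G.dist (root v) v

/-- An `H`-partition of `G`, presented as the function `P` sending each vertex of `G` to
the index (vertex of `H`) of its part: parts are non-empty (`P` is surjective) and for
every edge `vw` of `G`, either `v, w` lie in the same part or the parts of `v` and `w`
are adjacent in `H`. -/
def IsHPartition {V X : Type*} (G : SimpleGraph V) (H : SimpleGraph X) (P : V → X) : Prop :=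
  Function.Surjective P ∧ ∀ ⦃v w : V⦄, G.Adj v w → P v = P w ∨ H.Adj (P v) (P w)

/-- The partition (given by the fibres of) `P` has layered width at most `ℓ` with respect
to the layering `L`: every part has at most `ℓ` vertices in each layer. -/
def LayeredWidthLE {V X : Type*} (P : V → X) (L : V → ℕ) (ℓ : ℕ) : Prop :=
  ∀ (x : X) (i : ℕ), {v : V | P v = x ∧ L v = i}.ncard ≤ ℓ

/-- The quotient graph `G/P` of a partition of `G` given by the fibres of a surjection
`P : V → X`: distinct parts are adjacent iff some vertex of one is adjacent in `G` to some
vertex of the other. -/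
def quotientGraph {V X : Type*} (G : SimpleGraph V) (P : V → X) : SimpleGraph X where
  Adj x y := x ≠ y ∧ ∃ v w, G.Adj v w ∧ P v = x ∧ P w = y
  symm := by
    constructor
    rintro x y ⟨hxy, v, w, hvw, hv, hw⟩
    exact ⟨Ne.symm hxy, w, v, hvw.symm, hw, hv⟩
  loopless := by constructor; rintro x ⟨h, -⟩; exact h rfl

/-! ### Tree-decompositions and treewidth -/

/-- `(T, B)` is a tree-decomposition of `G`: `T` is a tree, for each vertex `v` of `G` the
set of nodes of `T` whose bag contains `v` induces a non-empty connected subgraph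
(subtree) of `T`, and each edge of `G` has both endpoints in some bag. -/
def IsTreeDecomp {V ι : Type*} (G : SimpleGraph V) (T : SimpleGraph ι) (B : ι → Set V) :
    Prop :=
  T.IsTree ∧
  (∀ v : V, (T.induce {x : ι | v ∈ B x}).Connected) ∧
  (∀ ⦃v w : V⦄, G.Adj v w → ∃ x, v ∈ B x ∧ w ∈ B x)

/-- `G` has treewidth at most `k`: it has a tree-decomposition with all bags of size at
most `k + 1`. -/
def TreewidthLE {V : Type*} (G : SimpleGraph V) (k : ℕ) : Prop :=
  ∃ (ι : Type) (T : SimpleGraph ι) (B : ι → Set V),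
    IsTreeDecomp G T B ∧ ∀ x, (B x).ncard ≤ k + 1

/-- `G` has layered treewidth at most `k`: it has a tree-decomposition and a layering such
that every bag has at most `k` vertices in each layer. -/
def LayeredTreewidthLE {V : Type*} (G : SimpleGraph V) (k : ℕ) : Prop :=
  ∃ (ι : Type) (T : SimpleGraph ι) (B : ι → Set V) (L : V → ℕ),
    IsTreeDecomp G T B ∧ IsLayering G L ∧
    ∀ (x : ι) (i : ℕ), {v : V | v ∈ B x ∧ L v = i}.ncard ≤ k

/-! ### Combinatorial embeddings, Euler genus, planarity

Embeddings of graphs in surfaces are formalized combinatorially, via embedding schemes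
(Heffter–Edmonds–Ringel): a rotation system (for each vertex, a cyclic ordering of the
darts leaving it) together with a signature on the edges. Faces are recovered as the
orbits of the face-tracing permutation on signed darts; each face corresponds to exactly
two orbits. For a connected graph, Euler's formula `n - m + f = 2 - g` determines the
Euler genus `g` of the embedding, and the Euler genus of a graph is the minimum over all
embedding schemes; a (possibly disconnected) graph embeds in a surface of Euler genus `g`
iff each of its components does. -/

/-- The face-tracing step of the embedding scheme `(ρ, σ)` on signed darts: having
traversed dart `d` with current sign `s`, the sign becomes `s' = s * σ(d)` and the next
dart is obtained from the reversal of `d` by applying the rotation at its tail, forwards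
or backwards according to `s'`. -/
def faceStep {V : Type*} (G : SimpleGraph V) (ρ : Equiv.Perm G.Dart) (σ : Sym2 V → Bool)
    (p : G.Dart × Bool) : G.Dart × Bool :=
  ((if (p.2 == σ p.1.edge) then ρ p.1.symm else ρ.symm p.1.symm), p.2 == σ p.1.edge)

/-- `ρ` is a rotation system on `G`: a permutation of the darts preserving tails and
acting as a single cycle on the darts at each vertex (a cyclic ordering of the darts
leaving each vertex). -/
def IsRotation {V : Type*} (G : SimpleGraph V) (ρ : Equiv.Perm G.Dart) : Prop :=
  (∀ d : G.Dart, (ρ d).fst = d.fst) ∧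
  (∀ d e : G.Dart, d.fst = e.fst → ∃ n : ℕ, (⇑ρ)^[n] d = e)

/-- The embedding scheme `(ρ, σ)` of `G` has Euler genus at most `g`: each connected
component `C` (containing at least one edge) satisfies Euler's inequality
`2 - (n_C - m_C + f_C) ≤ g`, written below with the number of darts of `C`
(which is `2 m_C`) and the number of orbits on signed darts of the face-tracing
permutation restricted to `C` (which is `2 f_C`). -/
def SchemeGenusLE {V : Type*} (G : SimpleGraph V) (ρ : Equiv.Perm G.Dart)
    (σ : Sym2 V → Bool) (g : ℕ) : Prop :=
  ∀ C : G.ConnectedComponent,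
    (∃ d : G.Dart, G.connectedComponentMk d.fst = C) →
    4 + Nat.card {d : G.Dart // G.connectedComponentMk d.fst = C}
      ≤ 2 * g + 2 * Nat.card {v : V // G.connectedComponentMk v = C}
        + Nat.card (Quot (fun a b : {p : G.Dart × Bool // G.connectedComponentMk p.1.fst = C} =>
            faceStep G ρ σ a.val = b.val))

/-- `G` has Euler genus at most `g`: it embeds in a surface of Euler genus at most `g`,
i.e. it has an embedding scheme of Euler genus at most `g`. -/
def EulerGenusLE {V : Type*} (G : SimpleGraph V) (g : ℕ) : Prop :=
  ∃ (ρ : Equiv.Perm G.Dart) (σ : Sym2 V → Bool), IsRotation G ρ ∧ SchemeGenusLE G ρ σ g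

/-- `G` is planar: it embeds in the sphere (Euler genus 0). -/
def IsPlanar {V : Type*} (G : SimpleGraph V) : Prop := EulerGenusLE G 0

/-- `G` is apex: deleting at most one vertex makes it planar. -/
def IsApex {V : Type*} (G : SimpleGraph V) : Prop :=
  ∃ S : Set V, S.ncard ≤ 1 ∧ IsPlanar (G.induce Sᶜ)

/-- `G` together with one new dominant (apex) vertex. -/
def addApex {V : Type*} (G : SimpleGraph V) : SimpleGraph (Option V) where
  Adj a b := (a = none ∧ ∃ w, b = some w) ∨ (b = none ∧ ∃ v, a = some v) ∨
    (∃ v w, a = some v ∧ b = some w ∧ G.Adj v w)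
  symm := by
    constructor
    rintro a b (⟨rfl, w, rfl⟩ | ⟨rfl, v, rfl⟩ | ⟨v, w, rfl, rfl, h⟩)
    · exact Or.inr (Or.inl ⟨rfl, w, rfl⟩)
    · exact Or.inl ⟨rfl, v, rfl⟩
    · exact Or.inr (Or.inr ⟨w, v, rfl, rfl, h.symm⟩)
  loopless := by
    constructor
    rintro a (⟨rfl, w, h⟩ | ⟨rfl, v, h⟩ | ⟨v, w, rfl, h2, h⟩)
    · cases h
    · cases h
    · obtain rfl : v = w := by injection h2
      exact G.loopless.irrefl v h

/-- `G` is outerplanar: it has a planar embedding with all vertices on the outer face;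
equivalently (and this is the formal definition used here), adding one new vertex
adjacent to all vertices of `G` yields a planar graph. -/
def IsOuterplanar {V : Type*} (G : SimpleGraph V) : Prop := IsPlanar (addApex G)

/-- `G` is a planar triangulation: a connected graph with a planar embedding scheme
(Euler's formula for genus 0 holds, written with darts and face-tracing orbits as in
`SchemeGenusLE`) in which every facial walk has length 3, i.e. every face (including the
outer face) is a triangle. -/
def IsPlanarTriangulation {V : Type*} (G : SimpleGraph V) : Prop :=
  G.Connected ∧
  ∃ (ρ : Equiv.Perm G.Dart) (σ : Sym2 V → Bool),
    IsRotation G ρ ∧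
    (∀ p : G.Dart × Bool, (faceStep G ρ σ)^[3] p = p) ∧
    4 + Nat.card G.Dart
      = 2 * Nat.card V + Nat.card (Quot (fun a b : G.Dart × Bool => faceStep G ρ σ a = b))

/-! ### Vertical paths and tripods -/

/-- `S` is (the vertex set of) a vertical path in the tree `T` rooted at `r`: a non-empty
path in `T` whose vertices have pairwise distinct distances from the root (so distances
along the path are `d+1, d+2, …, d+p` for some `d`). -/
def IsVerticalPath {V : Type*} (T : SimpleGraph V) (r : V) (S : Set V) : Prop :=
  S.Nonempty ∧ (T.induce S).Connected ∧ Set.InjOn (T.dist r) S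

/-- `S` is (the vertex set of) a tripod in the spanning tree `T` (rooted at `r`) of `G`:
the union of up to three pairwise disjoint vertical paths in `T` whose lower endpoints
(the endpoints farthest from the root) form a clique in `G`. -/
def IsTripod {V : Type*} (G T : SimpleGraph V) (r : V) (S : Set V) : Prop :=
  ∃ P : Fin 3 → Set V,
    S = P 0 ∪ P 1 ∪ P 2 ∧
    (∀ i j, i ≠ j → Disjoint (P i) (P j)) ∧
    (∀ i, P i = ∅ ∨ IsVerticalPath T r (P i)) ∧
    ∃ low : Fin 3 → V,
      (∀ i, (P i).Nonempty → low i ∈ P i ∧ ∀ x ∈ P i, T.dist r x ≤ T.dist r (low i)) ∧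
      ∀ i j, i ≠ j → (P i).Nonempty → (P j).Nonempty → G.Adj (low i) (low j)

/-! ### Minors -/

/-- `H` is a minor of `G`: there is a family of non-empty, connected, pairwise disjoint
branch sets in `G`, indexed by the vertices of `H`, with an edge of `G` between the branch
sets corresponding to each edge of `H`. -/
def IsMinor {α β : Type*} (H : SimpleGraph α) (G : SimpleGraph β) : Prop :=
  ∃ B : α → Set β,
    (∀ x, (B x).Nonempty) ∧
    (∀ x, (G.induce (B x)).Connected) ∧
    (∀ x y, x ≠ y → Disjoint (B x) (B y)) ∧
    ∀ ⦃x y⦄, H.Adj x y → ∃ u ∈ B x, ∃ v ∈ B y, G.Adj u v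

/-! ### Strong products and subgraph embeddings -/

/-- The strong product `A ⊠ B`. -/
def strongProd {α β : Type*} (A : SimpleGraph α) (B : SimpleGraph β) :
    SimpleGraph (α × β) where
  Adj p q := p ≠ q ∧ (p.1 = q.1 ∨ A.Adj p.1 q.1) ∧ (p.2 = q.2 ∨ B.Adj p.2 q.2)
  symm := by
    constructor
    rintro p q ⟨hne, h1, h2⟩
    exact ⟨hne.symm, Or.imp (fun h => h.symm) (fun h => h.symm) h1,
      Or.imp (fun h => h.symm) (fun h => h.symm) h2⟩
  loopless := ⟨fun p h => h.1 rfl⟩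

/-- `G` is (isomorphic to) a subgraph of `G'`. -/
def EmbedsIn {α β : Type*} (G : SimpleGraph α) (G' : SimpleGraph β) : Prop :=
  ∃ f : α → β, Function.Injective f ∧ ∀ ⦃v w⦄, G.Adj v w → G'.Adj (f v) (f w)

end QueuePaper

open QueuePaper in
/-- If a graph `G` has an `H`-partition with layered width at most `ℓ` such that `H` has
treewidth at most `k`, then `G` has layered treewidth at most `(k+1)ℓ`. -/
theorem layeredTreewidth_of_HPartition {V X : Type} [Fintype V] [Fintype X]
    (G : SimpleGraph V) (H : SimpleGraph X) (P : V → X) (L : V → ℕ) (k ℓ : ℕ)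
    (hP : IsHPartition G H P) (hL : IsLayering G L) (hW : LayeredWidthLE P L ℓ)
    (hH : TreewidthLE H k) :
    LayeredTreewidthLE G ((k + 1) * ℓ) := by
  classical
  obtain ⟨hsurj, hadj⟩ := hP
  obtain ⟨ι, T, B, ⟨hT, hconn, hedge⟩, hbag⟩ := hH
  refine ⟨ι, T, fun x => P ⁻¹' (B x), L, ⟨hT, ?_, ?_⟩, hL, ?_⟩
  · intro v
    exact hconn (P v)
  · intro v w hvw
    rcases hadj hvw with h | h
    · obtain ⟨⟨x, hx⟩⟩ := (hconn (P v)).nonempty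
      exact ⟨x, hx, show P w ∈ B x from h ▸ hx⟩
    · obtain ⟨x, hx1, hx2⟩ := hedge h
      exact ⟨x, hx1, hx2⟩
  · intro x i
    have hsub : {v : V | v ∈ P ⁻¹' (B x) ∧ L v = i}.toFinset ⊆
        ((B x).toFinset).biUnion (fun y => {v : V | P v = y ∧ L v = i}.toFinset) := by
      intro v hv
      simp only [Set.mem_toFinset, Set.mem_setOf_eq, Set.mem_preimage] at hv
      simp only [Finset.mem_biUnion, Set.mem_toFinset, Set.mem_setOf_eq]
      exact ⟨P v, hv.1, rfl, hv.2⟩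
    calc {v : V | v ∈ P ⁻¹' (B x) ∧ L v = i}.ncard
        = {v : V | v ∈ P ⁻¹' (B x) ∧ L v = i}.toFinset.card := Set.ncard_eq_toFinset_card' _
      _ ≤ (((B x).toFinset).biUnion (fun y => {v : V | P v = y ∧ L v = i}.toFinset)).card :=
          Finset.card_le_card hsub
      _ ≤ ∑ y ∈ (B x).toFinset, {v : V | P v = y ∧ L v = i}.toFinset.card :=
          Finset.card_biUnion_le
      _ ≤ ∑ _y ∈ (B x).toFinset, ℓ := by
          refine Finset.sum_le_sum fun y _ => ?_
          rw [← Set.ncard_eq_toFinset_card']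
          exact hW y i
      _ = (B x).toFinset.card * ℓ := by rw [Finset.sum_const, smul_eq_mul]
      _ ≤ (k + 1) * ℓ := by
          refine Nat.mul_le_mul_right _ ?_
          rw [← Set.ncard_eq_toFinset_card']
          exact hbag x
end

section
/- If a graph G has an H-partition of layered width ℓ with respect to a layering (V_0, V_1, …), for some graph H of treewidth at most k, then G has an H′-partition of layered width 1 with respect to the same layering, for some graph H′ of treewidth at most (k+1)ℓ − 1. -/
/-!
Common definitions for formalizing "Planar Graphs have Bounded Queue-Number"
(Dujmović, Joret, Micek, Morin, Ueckerdt, Wood).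

All graphs are finite simple graphs (`SimpleGraph V` with `[Fintype V]`).
-/

open Function

open QueuePaper in
/-- If a graph `G` has an `H`-partition of layered width `ℓ` with respect to a layering
`L`, for some graph `H` of treewidth at most `k`, then `G` has an `H'`-partition of
layered width 1 with respect to the same layering, for some graph `H'` of treewidth at
most `(k+1)ℓ - 1`. -/
theorem width_one_partition {V X : Type} [Fintype V] [Fintype X]
    (G : SimpleGraph V) (H : SimpleGraph X) (P : V → X) (L : V → ℕ) (k ℓ : ℕ)
    (hP : IsHPartition G H P) (hL : IsLayering G L) (hW : LayeredWidthLE P L ℓ)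
    (hH : TreewidthLE H k) :
    ∃ (X' : Type) (H' : SimpleGraph X') (P' : V → X'),
      IsHPartition G H' P' ∧ LayeredWidthLE P' L 1 ∧
      TreewidthLE H' ((k + 1) * ℓ - 1) := by
  classical
  obtain ⟨hPsurj, hPadj⟩ := hP
  obtain ⟨ι, T, B, ⟨hT, hconn, hedge⟩, hbag⟩ := hH
  set e : V → ℕ := fun v => (Fintype.equivFin V v : ℕ) with he_def
  have he : Function.Injective e := fun a b h =>
    (Fintype.equivFin V).injective (Fin.val_injective h)
  set r : V → ℕ := fun v => {w : V | P w = P v ∧ L w = L v ∧ e w < e v}.ncard with hr_def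
  -- if same part, same layer, smaller code, then smaller rank
  have key : ∀ a b : V, P a = P b → L a = L b → e a < e b → r a < r b := by
    intro a b hPab hLab heab
    apply Set.ncard_lt_ncard _ (Set.toFinite _)
    constructor
    · rintro w ⟨h1, h2, h3⟩
      exact ⟨h1.trans hPab, h2.trans hLab, h3.trans heab⟩
    · intro hsup
      have : a ∈ {w : V | P w = P b ∧ L w = L b ∧ e w < e b} := ⟨hPab, hLab, heab⟩
      exact absurd (hsup this).2.2 (lt_irrefl _)
  have hrlt : ∀ v : V, r v < ℓ := by
    intro v
    have h1 : r v < {w : V | P w = P v ∧ L w = L v}.ncard := by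
      apply Set.ncard_lt_ncard _ (Set.toFinite _)
      constructor
      · rintro w ⟨h1, h2, _⟩; exact ⟨h1, h2⟩
      · intro hsup
        exact absurd (hsup ⟨rfl, rfl⟩).2.2 (lt_irrefl _)
    exact lt_of_lt_of_le h1 (hW (P v) (L v))
  set Q : V → X × ℕ := fun v => (P v, r v) with hQ_def
  refine ⟨{x : X × ℕ // x ∈ Set.range Q}, quotientGraph G (fun v => ⟨Q v, ⟨v, rfl⟩⟩),
    fun v => ⟨Q v, ⟨v, rfl⟩⟩, ⟨?_, ?_⟩, ?_, ?_⟩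
  · rintro ⟨x, v, rfl⟩; exact ⟨v, rfl⟩
  · intro v w hvw
    by_cases h : (⟨Q v, ⟨v, rfl⟩⟩ : {x : X × ℕ // x ∈ Set.range Q}) = ⟨Q w, ⟨w, rfl⟩⟩
    · exact Or.inl h
    · exact Or.inr ⟨h, v, w, hvw, rfl, rfl⟩
  · -- layered width 1
    intro x i
    rw [Set.ncard_le_one_iff (Set.toFinite _)]
    rintro a b ⟨ha, hai⟩ ⟨hb, hbi⟩
    have hQab : Q a = Q b := by
      have := ha.trans hb.symm
      exact congrArg Subtype.val this
    have hPab : P a = P b := congrArg Prod.fst hQab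
    have hrab : r a = r b := congrArg Prod.snd hQab
    have hLab : L a = L b := hai.trans hbi.symm
    by_contra hne
    have heab : e a ≠ e b := fun h => hne (he h)
    rcases lt_or_gt_of_ne heab with h | h
    · exact absurd hrab (ne_of_lt (key a b hPab hLab h))
    · exact absurd hrab.symm (ne_of_lt (key b a hPab.symm hLab.symm h))
  · -- treewidth
    refine ⟨ι, T, fun t => {x' | x'.1.1 ∈ B t}, ⟨hT, ?_, ?_⟩, ?_⟩
    · intro x'
      exact hconn x'.1.1
    · rintro x' y' ⟨hne, v, w, hvw, hv, hw⟩
      have hx : x'.1.1 = P v := by rw [← hv]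
      have hy : y'.1.1 = P w := by rw [← hw]
      rcases hPadj hvw with h | h
      · obtain ⟨⟨t, ht⟩⟩ := (hconn (P v)).nonempty
        exact ⟨t, by rw [Set.mem_setOf_eq, hx]; exact ht,
          by rw [Set.mem_setOf_eq, hy, ← h]; exact ht⟩
      · obtain ⟨t, htv, htw⟩ := hedge h
        exact ⟨t, by rw [Set.mem_setOf_eq, hx]; exact htv,
          by rw [Set.mem_setOf_eq, hy]; exact htw⟩
    · intro t
      have hlt : ∀ x' : {x : X × ℕ // x ∈ Set.range Q}, x'.1.2 < ℓ := by
        rintro ⟨x, v, rfl⟩; exact hrlt v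
      have hinj : Function.Injective
          (fun x' : {x' : {x : X × ℕ // x ∈ Set.range Q} // x'.1.1 ∈ B t} =>
            ((⟨x'.1.1.1, x'.2⟩ : B t), (⟨x'.1.1.2, hlt x'.1⟩ : Fin ℓ))) := by
        rintro ⟨⟨⟨a1, a2⟩, ha⟩, hat⟩ ⟨⟨⟨b1, b2⟩, hb⟩, hbt⟩ h
        simp only [Prod.mk.injEq, Subtype.mk.injEq, Fin.mk.injEq] at h
        simp only [Subtype.mk.injEq, Prod.mk.injEq]
        exact ⟨h.1, h.2⟩
      have h1 : {x' : {x : X × ℕ // x ∈ Set.range Q} | x'.1.1 ∈ B t}.ncard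
          ≤ (k + 1) * ℓ := by
        rw [← Nat.card_coe_set_eq]
        calc Nat.card {x' : {x : X × ℕ // x ∈ Set.range Q} // x'.1.1 ∈ B t}
            ≤ Nat.card (B t × Fin ℓ) := Nat.card_le_card_of_injective _ hinj
          _ = (B t).ncard * ℓ := by
              rw [Nat.card_prod, Nat.card_coe_set_eq, Nat.card_eq_fintype_card,
                Fintype.card_fin]
          _ ≤ (k + 1) * ℓ := Nat.mul_le_mul_right ℓ (hbag t)
      have h2 : (k + 1) * ℓ ≤ (k + 1) * ℓ - 1 + 1 := by omega
      exact le_trans h1 h2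
end
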